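/- Let M ≠ 3 and let f, g ∈ V_s agree on [1, N−M]. Then there is a directed path in G(N, M) from f to g of length at most 4. -/
import Mathlib


/-- Edge relation of the configuration graph `G(N, M)`:
`(f, g)` is an edge iff for all `k`, `g k ≠ f k` iff `k` is the largest index in its `f`-fiber. -/
def RoomEdge (N M : ℕ) (f g : Fin N → Fin M) : Prop :=
  ∀ k : Fin N, g k ≠ f k ↔ ∀ j : Fin N, f j = f k → j ≤ k

/-- A directed path of length `n` from `f` to `g` in `G(N, M)`. -/
def RoomPath (N M : ℕ) (f g : Fin N → Fin M) (n : ℕ) : Prop :=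
  ∃ p : ℕ → Fin N → Fin M, p 0 = f ∧ p n = g ∧ ∀ i < n, RoomEdge N M (p i) (p (i + 1))

/-- `V_s`: configurations injective on the `M` largest indices `(N−M, N]`
(0-indexed: indices `k` with `N - M ≤ k`). -/
def RoomVs (N M : ℕ) (f : Fin N → Fin M) : Prop :=
  ∀ j k : Fin N, N - M ≤ (j : ℕ) → N - M ≤ (k : ℕ) → f j = f k → j = k

/-- `V_c`: configurations constant on the `M` largest indices `(N−M, N]`. -/
def RoomVc (N M : ℕ) (f : Fin N → Fin M) : Prop :=
  ∀ j k : Fin N, N - M ≤ (j : ℕ) → N - M ≤ (k : ℕ) → f j = f k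

/-- For `f ∈ V_s`, `k` is the max of its fiber iff `k` is a high index. -/
lemma roomVs_fiberMax {N M : ℕ} (f : Fin N → Fin M) (hf : RoomVs N M f) (k : Fin N) :
    (∀ j : Fin N, f j = f k → j ≤ k) ↔ N - M ≤ (k : ℕ) := by
  constructor
  · intro hmax
    by_contra hlow
    push_neg at hlow
    -- k is low, so M < N; f restricted to high indices is surjective
    have hMN : M < N := by omega
    set F : Fin M → Fin M := fun i => f ⟨N - M + i, by omega⟩ with hF
    have hFinj : Function.Injective F := by
      intro a b hab
      have := hf ⟨N - M + a, by omega⟩ ⟨N - M + b, by omega⟩ (by simp) (by simp) hab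
      have := Fin.mk.injEq .. ▸ this
      simp_all
      omega
    have hFsurj : Function.Surjective F := Finite.surjective_of_injective hFinj
    obtain ⟨i, hi⟩ := hFsurj (f k)
    have := hmax ⟨N - M + i, by omega⟩ hi
    simp [Fin.le_def] at this
    omega
  · intro hk j hjk
    by_contra hle
    rw [Fin.le_def] at hle
    have := hf j k (by omega) hk hjk
    omega

/-- One-step edge out of a `V_s` configuration. -/
lemma roomVs_edge {N M : ℕ} (f h : Fin N → Fin M) (hf : RoomVs N M f)
    (hlow : ∀ k : Fin N, (k : ℕ) < N - M → h k = f k)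
    (hhigh : ∀ k : Fin N, N - M ≤ (k : ℕ) → h k ≠ f k) :
    RoomEdge N M f h := by
  intro k
  rw [roomVs_fiberMax f hf k]
  constructor
  · intro hne
    by_contra hklow
    exact hne (hlow k (by omega))
  · exact hhigh k

/-- For `M ≥ 4`, there is a configuration in `V_s` agreeing with `f` on low indices and
disagreeing with both `f` and `g` on all high indices. -/
lemma roomVs_exists_mid {N M : ℕ} (hM : 4 ≤ M) (f g : Fin N → Fin M)
    (hf : RoomVs N M f) (hg : RoomVs N M g) :
    ∃ h : Fin N → Fin M, RoomVs N M h ∧ (∀ k : Fin N, (k : ℕ) < N - M → h k = f k) ∧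
      ∀ k : Fin N, N - M ≤ (k : ℕ) → h k ≠ f k ∧ h k ≠ g k := by
  classical
  set ι := {k : Fin N // N - M ≤ (k : ℕ)} with hι
  set t : ι → Finset (Fin M) := fun k => Finset.univ \ {f k.1, g k.1} with ht
  have hcard : Fintype.card ι ≤ M := by
    have : Function.Injective (fun k : ι => f k.1) := by
      intro a b hab
      exact Subtype.ext (hf a.1 b.1 a.2 b.2 hab)
    simpa using Fintype.card_le_of_injective _ this
  have hall : ∀ s : Finset ι, s.card ≤ (s.biUnion t).card := by
    intro s
    rcases le_or_gt s.card (M - 2) with hs | hs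
    · rcases s.eq_empty_or_nonempty with rfl | ⟨k, hk⟩
      · simp
      · have h1 : t k ⊆ s.biUnion t := Finset.subset_biUnion_of_mem t hk
        have h2 : M - 2 ≤ (t k).card := by
          simp only [ht]
          rw [Finset.card_sdiff_of_subset (Finset.subset_univ _)]
          have h3 : ({f k.1, g k.1} : Finset (Fin M)).card ≤ 2 := by
            apply le_trans (Finset.card_insert_le _ _); simp
          simp only [Finset.card_univ, Fintype.card_fin]
          omega
        exact le_trans hs (le_trans h2 (Finset.card_le_card h1))
    · -- s.card ≥ M - 1 ≥ 3 : biUnion is everything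
      have hbig : (3 : ℕ) ≤ s.card := by omega
      have huniv : s.biUnion t = Finset.univ := by
        apply Finset.eq_univ_of_forall
        intro v
        rw [Finset.mem_biUnion]
        by_contra hv
        push_neg at hv
        have hmem : ∀ k ∈ s, f k.1 = v ∨ g k.1 = v := by
          intro k hk
          have := hv k hk
          simp only [ht, Finset.mem_sdiff, Finset.mem_univ, true_and, Finset.mem_insert,
            Finset.mem_singleton, not_not] at this
          tauto
        have hsub : s ⊆ s.filter (fun k => f k.1 = v) ∪ s.filter (fun k => g k.1 = v) := by
          intro k hk
          rcases hmem k hk with h | h <;> simp [Finset.mem_filter, hk, h]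
        have c1 : (s.filter (fun k => f k.1 = v)).card ≤ 1 := by
          apply Finset.card_le_one.mpr
          intro a ha b hb
          simp only [Finset.mem_filter] at ha hb
          exact Subtype.ext (hf a.1 b.1 a.2 b.2 (ha.2.trans hb.2.symm))
        have c2 : (s.filter (fun k => g k.1 = v)).card ≤ 1 := by
          apply Finset.card_le_one.mpr
          intro a ha b hb
          simp only [Finset.mem_filter] at ha hb
          exact Subtype.ext (hg a.1 b.1 a.2 b.2 (ha.2.trans hb.2.symm))
        have := Finset.card_le_card hsub
        have := Finset.card_union_le (s.filter (fun k => f k.1 = v))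
          (s.filter (fun k => g k.1 = v))
        omega
      rw [huniv]
      simp only [Finset.card_univ, Fintype.card_fin]
      exact le_trans (Finset.card_le_univ s) hcard
  obtain ⟨e, he_inj, he_mem⟩ := (Finset.all_card_le_biUnion_card_iff_exists_injective t).mp hall
  have he_mem' : ∀ x : ι, e x ≠ f x.1 ∧ e x ≠ g x.1 := by
    intro x
    have := he_mem x
    simp only [ht, Finset.mem_sdiff, Finset.mem_univ, true_and, Finset.mem_insert,
      Finset.mem_singleton] at this
    tauto
  refine ⟨fun k => if hk : N - M ≤ (k : ℕ) then e ⟨k, hk⟩ else f k, ?_, ?_, ?_⟩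
  · intro j k hj hk hjk
    simp only [dif_pos hj, dif_pos hk] at hjk
    exact congrArg Subtype.val (he_inj hjk)
  · intro k hk
    simp only [dif_neg (show ¬ N - M ≤ (k:ℕ) by omega)]
  · intro k hk
    simp only [dif_pos hk]
    exact he_mem' ⟨k, hk⟩

theorem Vs_exchange_in_four_steps (N M : ℕ) (hN : 1 ≤ N) (hM : 2 ≤ M) (hM3 : M ≠ 3)
    (f g : Fin N → Fin M) (hf : RoomVs N M f) (hg : RoomVs N M g)
    (hagree : ∀ k : Fin N, (k : ℕ) < N - M → f k = g k) :
    ∃ n ≤ 4, RoomPath N M f g n := by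
  classical
  by_cases hfg : f = g
  · exact ⟨0, by omega, fun _ => f, rfl, hfg, by omega⟩
  by_cases hdisc : ∀ k : Fin N, N - M ≤ (k : ℕ) → f k ≠ g k
  · -- one step
    refine ⟨1, by omega, fun i => if i = 0 then f else g, by simp, by simp, ?_⟩
    intro i hi
    interval_cases i
    simp only [if_pos rfl, if_neg one_ne_zero]
    exact roomVs_edge f g hf (fun k hk => (hagree k hk).symm) (fun k hk => (hdisc k hk).symm)
  · -- two steps; first show 4 ≤ M
    push_neg at hdisc
    obtain ⟨k₁, hk₁, hfg₁⟩ := hdisc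
    obtain ⟨k₀, hfg₀⟩ : ∃ k, f k ≠ g k := Function.ne_iff.mp hfg
    have hk₀ : N - M ≤ (k₀ : ℕ) := by
      by_contra h
      exact hfg₀ (hagree k₀ (by omega))
    have hM4 : 4 ≤ M := by
      rcases Nat.lt_or_ge M 4 with h4 | h4
      · exfalso
        have hM2 : M = 2 := by omega
        -- contradiction in Fin 2
        have hne : k₀ ≠ k₁ := fun h => hfg₀ (h ▸ hfg₁)
        have h1 : f k₀ ≠ f k₁ := fun h => hne (hf k₀ k₁ hk₀ hk₁ h)
        have h2 : g k₀ ≠ g k₁ := fun h => hne (hg k₀ k₁ hk₀ hk₁ h)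
        have e0 : (f k₀ : ℕ) < M := (f k₀).isLt
        have e1 : (f k₁ : ℕ) < M := (f k₁).isLt
        have e2 : (g k₀ : ℕ) < M := (g k₀).isLt
        have v1 : (f k₀ : ℕ) ≠ (f k₁ : ℕ) := fun h => h1 (Fin.ext h)
        have v2 : (g k₀ : ℕ) ≠ (g k₁ : ℕ) := fun h => h2 (Fin.ext h)
        have v3 : (f k₁ : ℕ) = (g k₁ : ℕ) := congrArg Fin.val hfg₁
        have : (f k₀ : ℕ) = (g k₀ : ℕ) := by omega
        exact hfg₀ (Fin.ext this)
      · exact h4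
    obtain ⟨h, hh, hhlow, hhhigh⟩ := roomVs_exists_mid hM4 f g hf hg
    refine ⟨2, by omega, fun i => if i = 0 then f else if i = 1 then h else g, by simp, by simp, ?_⟩
    intro i hi
    interval_cases i
    · simp only [if_pos rfl, if_neg one_ne_zero]
      exact roomVs_edge f h hf hhlow (fun k hk => (hhhigh k hk).1)
    · simp only [if_neg one_ne_zero, if_pos rfl, if_neg (by norm_num : (2:ℕ) ≠ 0),
        if_neg (by norm_num : (2:ℕ) ≠ 1)]
      exact roomVs_edge h g hh
        (fun k hk => ((hhlow k hk).trans (hagree k hk)).symm)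
        (fun k hk => ((hhhigh k hk).2).symm)
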